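/- Let (X,d) be a metric space, f: X → X measurable, and μ an f-invariant Borel probability measure that is weak-mixing and whose support is not a single point. Then for suitable δ, ν > 0 and every m ∈ ℕ there exist m points in X that are pairwise (f,δ,ν)-separated; in particular f has infinite separation numbers. -/

import Mathlib

open Filter Metric Set

/-- `Sn f δ x y n` counts the times `0 ≤ k < n` with `dist (f^[k] x) (f^[k] y) ≥ δ`. -/
noncomputable def Sn {X : Type*} [PseudoMetricSpace X] (f : X → X) (δ : ℝ) (x y : X)
    (n : ℕ) : ℕ :=
  Set.ncard {k : ℕ | k < n ∧ δ ≤ dist (f^[k] x) (f^[k] y)}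

/-- asymptotic separation frequency `limsup_n S_n(f,δ,x,y)/n`. -/
noncomputable def sepFreq {X : Type*} [PseudoMetricSpace X] (f : X → X) (δ : ℝ) (x y : X) : ℝ :=
  Filter.limsup (fun n : ℕ => (Sn f δ x y n : ℝ) / n) Filter.atTop

/-- A set is `(f,δ,ν)`-separated if all pairs of distinct points are `(f,δ,ν)`-separated. -/
def IsSeparatedSet {X : Type*} [PseudoMetricSpace X] (f : X → X) (δ ν : ℝ) (S : Set X) : Prop :=
  ∀ x ∈ S, ∀ y ∈ S, x ≠ y → ν ≤ sepFreq f δ x y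

/-- A set is `(f,δ,ν)`-spanning if every point has a companion in it with separation
frequency `< ν`. -/
def IsSpanningSet {X : Type*} [PseudoMetricSpace X] (f : X → X) (δ ν : ℝ) (S : Set X) : Prop :=
  ∀ x : X, ∃ y ∈ S, sepFreq f δ x y < ν

/-- `SepNum f δ ν`: supremal cardinality of an `(f,δ,ν)`-separated set. -/
noncomputable def SepNum {X : Type*} [PseudoMetricSpace X] (f : X → X) (δ ν : ℝ) : ℕ∞ :=
  ⨆ (S : Set X) (_ : IsSeparatedSet f δ ν S), S.encard

/-- `SpanNum f δ ν`: minimal cardinality of an `(f,δ,ν)`-spanning set. -/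
noncomputable def SpanNum {X : Type*} [PseudoMetricSpace X] (f : X → X) (δ ν : ℝ) : ℕ∞ :=
  ⨅ (S : Set X) (_ : IsSpanningSet f δ ν S), S.encard

open MeasureTheory


open MeasureTheory
open scoped ENNReal

private noncomputable def psiF {α : Type*} (T : α → α) (B : Set α) (n : ℕ) (x : α) : ℝ≥0∞ :=
  ∑ k ∈ Finset.range n, B.indicator 1 (T^[k] x)

private noncomputable def phiF {α : Type*} (T : α → α) (B : Set α) (n : ℕ) (x : α) : ℝ≥0∞ :=
  psiF T B n x / n

private lemma limsup_le_limsup_of_le_add_inv (u v : ℕ → ℝ≥0∞)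
    (h : ∀ n : ℕ, u n ≤ v n + 1 / n) :
    Filter.limsup u Filter.atTop ≤ Filter.limsup v Filter.atTop := by
  refine ENNReal.le_of_forall_pos_le_add fun ε hε _ => ?_
  have hε' : (0 : ℝ≥0∞) < (ε : ℝ≥0∞) := by exact_mod_cast hε
  have hev : ∀ᶠ n : ℕ in Filter.atTop, 1 / (n : ℝ≥0∞) < (ε : ℝ≥0∞) := by
    have h0 : Filter.Tendsto (fun n : ℕ => 1 / (n : ℝ≥0∞)) Filter.atTop (nhds 0) := by
      simpa [one_div] using ENNReal.tendsto_inv_nat_nhds_zero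
    exact h0.eventually_lt_const hε'
  have h1 : Filter.limsup u Filter.atTop ≤
      Filter.limsup (fun n : ℕ => v n + (ε : ℝ≥0∞)) Filter.atTop := by
    refine limsup_le_limsup ?_
    filter_upwards [hev] with n hn
    exact (h n).trans (add_le_add le_rfl hn.le)
  rwa [limsup_add_const Filter.atTop v (ε : ℝ≥0∞) isBounded_le_of_top
    isCobounded_le_of_bot] at h1

private lemma ergodic_limsup_freq {α : Type*} [MeasurableSpace α] {T : α → α} {μ : Measure α}
    [IsProbabilityMeasure μ] (herg : Ergodic T μ) {B : Set α} (hB : MeasurableSet B) :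
    ∀ᵐ x ∂μ, μ B ≤ Filter.limsup (fun n : ℕ => phiF T B n x) Filter.atTop := by
  classical
  have hT : Measurable T := herg.toMeasurePreserving.measurable
  set c : ℝ≥0∞ := μ B with hc
  have hc_ne_top : c ≠ ⊤ := measure_ne_top μ B
  have hψmeas : ∀ n, Measurable (psiF T B n) := fun n =>
    Finset.measurable_sum _ fun k _ => (measurable_one.indicator hB).comp (hT.iterate k)
  have hφmeas : ∀ n, Measurable (phiF T B n) := fun n => (hψmeas n).div measurable_const
  set G : α → ℝ≥0∞ := fun x => Filter.limsup (fun n : ℕ => phiF T B n x) Filter.atTop with hGdef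
  have hG : Measurable G := Measurable.limsup hφmeas
  have hind_le : ∀ y : α, B.indicator (1 : α → ℝ≥0∞) y ≤ 1 := by
    intro y
    rw [Set.indicator_apply]
    split <;> simp
  have hψle : ∀ n (x : α), psiF T B n x ≤ n := by
    intro n x
    calc psiF T B n x ≤ ∑ _k ∈ Finset.range n, 1 :=
          Finset.sum_le_sum fun k _ => hind_le _
      _ = n := by simp
  have hφle : ∀ n (x : α), phiF T B n x ≤ 1 := fun n x =>
    ENNReal.div_le_of_le_mul (by simpa using hψle n x)
  have hint : ∀ n : ℕ, ∫⁻ x, psiF T B n x ∂μ = n * c := by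
    intro n
    simp only [psiF]
    have hmk : ∀ k ∈ Finset.range n, Measurable fun x => B.indicator (1 : α → ℝ≥0∞) (T^[k] x) :=
      fun k _ => (measurable_one.indicator hB).comp (hT.iterate k)
    rw [lintegral_finset_sum _ hmk]
    have hterm : ∀ k : ℕ, ∫⁻ x, B.indicator (1 : α → ℝ≥0∞) (T^[k] x) ∂μ = c := by
      intro k
      rw [(herg.toMeasurePreserving.iterate k).lintegral_comp (measurable_one.indicator hB)]
      exact lintegral_indicator_one hB
    simp [hterm, Finset.sum_const, Finset.card_range, nsmul_eq_mul]
  have hφint : ∀ n : ℕ, 1 ≤ n → ∫⁻ x, phiF T B n x ∂μ = c := by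
    intro n hn
    have hn0 : ((n : ℝ≥0∞)) ≠ 0 := by exact_mod_cast (by omega : n ≠ 0)
    simp only [phiF, div_eq_mul_inv]
    rw [lintegral_mul_const _ (hψmeas n), hint, mul_comm (n : ℝ≥0∞) c, mul_assoc,
      ENNReal.mul_inv_cancel hn0 (ENNReal.natCast_ne_top n), mul_one]
  have hrev : c ≤ ∫⁻ x, G x ∂μ := by
    have h1 : Filter.limsup (fun n : ℕ => ∫⁻ x, phiF T B n x ∂μ) Filter.atTop = c := by
      have heq : (fun n : ℕ => ∫⁻ x, phiF T B n x ∂μ) =ᶠ[Filter.atTop] fun _ => c := by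
        filter_upwards [eventually_ge_atTop 1] with n hn using hφint n hn
      rw [Filter.limsup_congr heq, limsup_const]
    calc c = Filter.limsup (fun n : ℕ => ∫⁻ x, phiF T B n x ∂μ) Filter.atTop := h1.symm
      _ ≤ ∫⁻ x, G x ∂μ :=
        limsup_lintegral_le 1 hφmeas (fun n => Eventually.of_forall (hφle n)) (by simp)
  have hshift : ∀ n (x : α),
      psiF T B n (T x) = ∑ k ∈ Finset.range n, B.indicator 1 (T^[k + 1] x) := by
    intro n x
    simp only [psiF]
    exact Finset.sum_congr rfl fun k _ => by rw [← Function.iterate_succ_apply]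
  have hGinv : ∀ x, G (T x) = G x := by
    intro x
    have k1 : ∀ n : ℕ, phiF T B n (T x) ≤ phiF T B n x + 1 / n := by
      intro n
      have e1 : psiF T B n (T x) ≤ psiF T B n x + 1 := by
        rw [hshift]
        have h2 : ∑ k ∈ Finset.range n, B.indicator (1 : α → ℝ≥0∞) (T^[k + 1] x) ≤
            psiF T B (n + 1) x := by
          rw [show psiF T B (n + 1) x =
            (∑ k ∈ Finset.range n, B.indicator (1 : α → ℝ≥0∞) (T^[k + 1] x)) +
              B.indicator 1 (T^[0] x) from by simp only [psiF]; rw [Finset.sum_range_succ']]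
          exact le_self_add
        have h3 : psiF T B (n + 1) x ≤ psiF T B n x + 1 := by
          rw [show psiF T B (n + 1) x = psiF T B n x + B.indicator 1 (T^[n] x) from by
            simp only [psiF]; rw [Finset.sum_range_succ]]
          exact add_le_add le_rfl (hind_le _)
        exact h2.trans h3
      calc phiF T B n (T x) = psiF T B n (T x) / n := rfl
        _ ≤ (psiF T B n x + 1) / n := ENNReal.div_le_div_right e1 _
        _ = phiF T B n x + 1 / n := by rw [ENNReal.add_div]; rfl
    have k2 : ∀ n : ℕ, phiF T B n x ≤ phiF T B n (T x) + 1 / n := by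
      intro n
      have e1 : psiF T B n x ≤ psiF T B n (T x) + 1 := by
        have h2 : psiF T B n x ≤ psiF T B (n + 1) x := by
          rw [show psiF T B (n + 1) x = psiF T B n x + B.indicator 1 (T^[n] x) from by
            simp only [psiF]; rw [Finset.sum_range_succ]]
          exact le_self_add
        have h3 : psiF T B (n + 1) x ≤ psiF T B n (T x) + 1 := by
          rw [show psiF T B (n + 1) x =
            (∑ k ∈ Finset.range n, B.indicator (1 : α → ℝ≥0∞) (T^[k + 1] x)) +
              B.indicator 1 (T^[0] x) from by simp only [psiF]; rw [Finset.sum_range_succ']]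
          rw [← hshift]
          exact add_le_add le_rfl (hind_le _)
        exact h2.trans h3
      calc phiF T B n x = psiF T B n x / n := rfl
        _ ≤ (psiF T B n (T x) + 1) / n := ENNReal.div_le_div_right e1 _
        _ = phiF T B n (T x) + 1 / n := by rw [ENNReal.add_div]; rfl
    exact le_antisymm (limsup_le_limsup_of_le_add_inv _ _ k1)
      (limsup_le_limsup_of_le_add_inv _ _ k2)
  set P : Set α := {x | c ≤ G x} with hPdef
  have hPm : MeasurableSet P := measurableSet_le measurable_const hG
  have hPinv : T ⁻¹' P = P := by
    ext x
    simp only [hPdef, Set.mem_preimage, Set.mem_setOf_eq, hGinv x]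
  haveI : (ae μ).NeBot := ae_neBot.mpr (IsProbabilityMeasure.ne_zero μ)
  rcases herg.toPreErgodic.ae_empty_or_univ hPm hPinv with h | h
  · exfalso
    have hnull : μ P = 0 := by rwa [ae_eq_empty] at h
    have hlt : ∀ᵐ x ∂μ, G x < c := by
      have hnm : ∀ᵐ x ∂μ, x ∉ P := measure_eq_zero_iff_ae_notMem.mp hnull
      exact hnm.mono fun x hx => not_le.mp hx
    have hle : ∫⁻ x, G x ∂μ ≤ c := by
      calc ∫⁻ x, G x ∂μ ≤ ∫⁻ _, c ∂μ := lintegral_mono_ae (hlt.mono fun x h' => h'.le)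
        _ = c := by simp [lintegral_const]
    have heq : ∫⁻ x, G x ∂μ = c := le_antisymm hle hrev
    have hzero : ∫⁻ x, (c - G x) ∂μ = 0 := by
      rw [lintegral_sub hG (by rw [heq]; exact hc_ne_top) (hlt.mono fun x h' => h'.le), heq,
        lintegral_const, measure_univ, mul_one, tsub_self]
    have hae0 : ∀ᵐ x ∂μ, c - G x = 0 := by
      have := (lintegral_eq_zero_iff (measurable_const.sub hG)).mp hzero
      exact this.mono fun x hx => hx
    have hge : ∀ᵐ x ∂μ, c ≤ G x := hae0.mono fun x hx => tsub_eq_zero_iff_le.mp hx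
    obtain ⟨x, hx1, hx2⟩ := (hge.and hlt).exists
    exact absurd hx1 (not_le.mpr hx2)
  · have h' : μ Pᶜ = 0 := ae_eq_univ.mp h
    have hmem : ∀ᵐ x ∂μ, x ∈ P := by
      rw [ae_iff]
      exact h'
    exact hmem.mono fun x hx => hx

private lemma iterate_pi_map {X : Type*} (f : X → X) {m : ℕ} (k : ℕ) (x : Fin m → X) (i : Fin m) :
    (fun y : Fin m → X => fun i => f (y i))^[k] x i = f^[k] (x i) := by
  induction k generalizing x with
  | zero => rfl
  | succ k ih =>
    rw [Function.iterate_succ_apply, Function.iterate_succ_apply]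
    exact ih _

private lemma Sn_eq_card' {X : Type*} [PseudoMetricSpace X] (f : X → X) (δ : ℝ) (x y : X)
    (n : ℕ) :
    Sn f δ x y n = ((Finset.range n).filter (fun k => δ ≤ dist (f^[k] x) (f^[k] y))).card := by
  rw [Sn, ← Set.ncard_coe_finset]
  congr 1
  ext k
  simp [Finset.mem_filter, Finset.mem_range]

private lemma Sn_le_card' {X : Type*} [PseudoMetricSpace X] (f : X → X) (δ : ℝ) (x y : X)
    (n : ℕ) : Sn f δ x y n ≤ n := by
  rw [Sn_eq_card']
  exact (Finset.card_filter_le _ _).trans_eq (Finset.card_range n)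

private lemma sepFreq_self' {X : Type*} [PseudoMetricSpace X] (f : X → X) {δ : ℝ} (hδ : 0 < δ)
    (x : X) : sepFreq f δ x x = 0 := by
  have h : ∀ n : ℕ, Sn f δ x x n = 0 := by
    intro n
    rw [Sn]
    convert Set.ncard_empty ℕ using 2
    ext k
    simp only [Set.mem_setOf_eq, Set.mem_empty_iff_false, iff_false, not_and]
    intro _
    rw [dist_self]
    exact not_le.mpr hδ
  rw [sepFreq]
  simp only [h, Nat.cast_zero, zero_div]
  exact Filter.limsup_const 0

/-- if `f` preserves a weak-mixing Borel probability measure `μ`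
(weak mixing phrased via ergodicity of all finite products) whose support is not a
single point, then for suitable `δ, ν > 0` and every `m` there are `m` points that
are pairwise `(f,δ,ν)`-separated; in particular `f` has infinite separation numbers. -/
theorem infinite_separation_of_weak_mixing {X : Type*} [MetricSpace X]
    [MeasurableSpace X] [BorelSpace X] (f : X → X) (hf : Measurable f)
    (μ : Measure X) [IsProbabilityMeasure μ] (hinv : MeasurePreserving f μ μ)
    (hwm : ∀ m : ℕ, 2 ≤ m →
      Ergodic (fun x : Fin m → X => fun i => f (x i)) (Measure.pi fun _ => μ))
    (hsupp : ∃ a b : X, a ≠ b ∧ (∀ ε > (0 : ℝ), 0 < μ (Metric.ball a ε)) ∧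
      (∀ ε > (0 : ℝ), 0 < μ (Metric.ball b ε))) :
    ∃ δ > (0 : ℝ), ∃ ν > (0 : ℝ), ∀ m : ℕ, ∃ S : Finset X,
      S.card = m ∧ ∀ x ∈ S, ∀ y ∈ S, x ≠ y → ν ≤ sepFreq f δ x y := by
  classical
  obtain ⟨a, b, hab, ha, hb⟩ := hsupp
  have hd0 : (0 : ℝ) < dist a b := dist_pos.mpr hab
  set r : ℝ := dist a b / 4 with hrdef
  set δ : ℝ := dist a b / 2 with hδdef
  have hδ0 : 0 < δ := by positivity
  set E : Set X := Metric.ball a r with hEdef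
  set F : Set X := Metric.ball b r with hFdef
  have hE0 : 0 < μ E := ha r (by positivity)
  have hF0 : 0 < μ F := hb r (by positivity)
  have hEF : ∀ u v : X, u ∈ E → v ∈ F → δ ≤ dist u v := by
    intro u v hu hv
    have h1 : dist u a < r := by rwa [hEdef, Metric.mem_ball] at hu
    have h2 : dist v b < r := by rwa [hFdef, Metric.mem_ball] at hv
    have h3 : dist a b ≤ dist a u + dist u v + dist v b := dist_triangle4 a u v b
    have hc : dist a u = dist u a := dist_comm a u
    rw [hδdef]
    rw [hrdef] at h1 h2
    linarith
  have hEF_ne_top : μ E * μ F ≠ ⊤ :=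
    ENNReal.mul_ne_top (measure_ne_top μ E) (measure_ne_top μ F)
  set ν : ℝ := (μ E * μ F).toReal with hνdef
  have hν0 : 0 < ν :=
    ENNReal.toReal_pos (mul_ne_zero hE0.ne' hF0.ne') hEF_ne_top
  have hofν : ENNReal.ofReal ν = μ E * μ F := ENNReal.ofReal_toReal hEF_ne_top
  refine ⟨δ, hδ0, ν, hν0, ?_⟩
  intro m
  match m with
  | 0 => exact ⟨∅, rfl, by simp⟩
  | 1 =>
    refine ⟨{a}, rfl, ?_⟩
    intro x hx y hy hxy
    simp only [Finset.mem_singleton] at hx hy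
    exact absurd (hx.trans hy.symm) hxy
  | (n + 2) =>
    have herg := hwm (n + 2) (by omega)
    set T : (Fin (n + 2) → X) → Fin (n + 2) → X := fun x i => f (x i) with hTdef
    set μm : Measure (Fin (n + 2) → X) := Measure.pi (fun _ => μ) with hμmdef
    haveI : IsProbabilityMeasure μm := by rw [hμmdef]; infer_instance
    have hiter : ∀ (k : ℕ) (y : Fin (n + 2) → X) (i : Fin (n + 2)),
        T^[k] y i = f^[k] (y i) := by
      intro k y i
      rw [hTdef]
      exact iterate_pi_map f k y i
    set B : Fin (n + 2) → Fin (n + 2) → Set (Fin (n + 2) → X) :=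
      fun i j => ((fun y : Fin (n + 2) → X => y i) ⁻¹' E) ∩
        ((fun y : Fin (n + 2) → X => y j) ⁻¹' F) with hBdef
    have hBmeas : ∀ i j, MeasurableSet (B i j) := fun i j =>
      ((measurable_pi_apply i) measurableSet_ball).inter
        ((measurable_pi_apply j) measurableSet_ball)
    have hBμ : ∀ i j : Fin (n + 2), i ≠ j → μm (B i j) = μ E * μ F := by
      intro i j hij
      have hBeq : B i j = Set.pi Set.univ
          (fun k => if k = i then E else if k = j then F else Set.univ) := by
        ext y
        simp only [hBdef, Set.mem_inter_iff, Set.mem_preimage, Set.mem_pi, Set.mem_univ,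
          forall_true_left, true_implies]
        constructor
        · rintro ⟨h1, h2⟩ k
          split_ifs with hk1 hk2
          · rwa [hk1]
          · rwa [hk2]
          · trivial
        · intro h
          constructor
          · have := h i; simpa using this
          · have := h j; simpa [Ne.symm hij] using this
      rw [hBeq, hμmdef, Measure.pi_pi]
      rw [Fintype.prod_eq_mul i j hij ?_]
      · simp [Ne.symm hij]
      · intro k ⟨hk1, hk2⟩
        simp [hk1, hk2]
    have hall : ∀ᵐ x ∂μm, ∀ i j : Fin (n + 2), i ≠ j →
        μ E * μ F ≤ Filter.limsup (fun n' : ℕ => phiF T (B i j) n' x) Filter.atTop := by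
      rw [ae_all_iff]
      intro i
      rw [ae_all_iff]
      intro j
      by_cases hij : i = j
      · exact Eventually.of_forall fun x h => absurd hij h
      · exact (ergodic_limsup_freq herg (hBmeas i j)).mono fun x hx _ => hBμ i j hij ▸ hx
    haveI : (ae μm).NeBot := ae_neBot.mpr (IsProbabilityMeasure.ne_zero μm)
    obtain ⟨x, hx⟩ := hall.exists
    have key : ∀ i j : Fin (n + 2), i ≠ j → ν ≤ sepFreq f δ (x i) (x j) := by
      intro i j hij
      have h1 := hx i j hij
      have hpsiSn : ∀ n' : ℕ,
          psiF T (B i j) n' x ≤ (Sn f δ (x i) (x j) n' : ℝ≥0∞) := by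
        intro n'
        rw [Sn_eq_card']
        calc psiF T (B i j) n' x
            = ∑ k ∈ Finset.range n', if T^[k] x ∈ B i j then (1 : ℝ≥0∞) else 0 := by
              simp only [psiF, Set.indicator_apply, Pi.one_apply]
          _ ≤ ∑ k ∈ Finset.range n',
              if δ ≤ dist (f^[k] (x i)) (f^[k] (x j)) then (1 : ℝ≥0∞) else 0 := by
              refine Finset.sum_le_sum fun k _ => ?_
              by_cases hk : T^[k] x ∈ B i j
              · have hdist : δ ≤ dist (f^[k] (x i)) (f^[k] (x j)) := by
                  obtain ⟨hk1, hk2⟩ := hk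
                  simp only [Set.mem_preimage] at hk1 hk2
                  rw [hiter k x i] at hk1
                  rw [hiter k x j] at hk2
                  exact hEF _ _ hk1 hk2
                rw [if_pos hk, if_pos hdist]
              · rw [if_neg hk]
                exact zero_le
          _ = (((Finset.range n').filter
              fun k => δ ≤ dist (f^[k] (x i)) (f^[k] (x j))).card : ℝ≥0∞) := by
              rw [Finset.sum_boole]
      have h2 : ENNReal.ofReal ν ≤
          Filter.limsup (fun n' : ℕ => (Sn f δ (x i) (x j) n' : ℝ≥0∞) / n') Filter.atTop := by
        rw [hofν]
        refine le_trans h1 (limsup_le_limsup (Eventually.of_forall fun n' => ?_))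
        exact ENNReal.div_le_div_right (hpsiSn n') _
      by_contra hcon
      push_neg at hcon
      obtain ⟨ν', hν'1, hν'2⟩ := exists_between hcon
      have hbdd : IsBoundedUnder (· ≤ ·) Filter.atTop
          (fun n' : ℕ => (Sn f δ (x i) (x j) n' : ℝ) / n') := by
        refine isBoundedUnder_of ⟨1, fun n' => ?_⟩
        refine div_le_one_of_le₀ ?_ (Nat.cast_nonneg _)
        exact_mod_cast Sn_le_card' f δ (x i) (x j) n'
      have hev : ∀ᶠ n' in Filter.atTop, ((Sn f δ (x i) (x j) n' : ℝ) / n') < ν' :=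
        eventually_lt_of_limsup_lt hν'1 hbdd
      have h3 : Filter.limsup (fun n' : ℕ => (Sn f δ (x i) (x j) n' : ℝ≥0∞) / n')
          Filter.atTop ≤ ENNReal.ofReal ν' := by
        refine limsup_le_of_le (by isBoundedDefault) ?_
        filter_upwards [hev, eventually_ge_atTop 1] with n' h1' h2'
        have hpos : (0 : ℝ) < (n' : ℝ) := by exact_mod_cast h2'
        have heq : ((Sn f δ (x i) (x j) n' : ℝ≥0∞)) / (n' : ℝ≥0∞) =
            ENNReal.ofReal ((Sn f δ (x i) (x j) n' : ℝ) / n') := by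
          rw [ENNReal.ofReal_div_of_pos hpos, ENNReal.ofReal_natCast, ENNReal.ofReal_natCast]
        rw [heq]
        exact ENNReal.ofReal_le_ofReal h1'.le
      have hcontr : ENNReal.ofReal ν ≤ ENNReal.ofReal ν' := h2.trans h3
      have hlt : ENNReal.ofReal ν' < ENNReal.ofReal ν :=
        (ENNReal.ofReal_lt_ofReal_iff hν0).mpr hν'2
      exact absurd hcontr (not_le.mpr hlt)
    have hinj : Function.Injective x := by
      intro i j hij2
      by_contra hne
      have hk := key i j hne
      rw [hij2, sepFreq_self' f hδ0 (x j)] at hk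
      exact absurd hk (not_le.mpr hν0)
    refine ⟨Finset.univ.image x, ?_, ?_⟩
    · rw [Finset.card_image_of_injective _ hinj, Finset.card_univ, Fintype.card_fin]
    · intro u hu v hv huv
      simp only [Finset.mem_image, Finset.mem_univ, true_and] at hu hv
      obtain ⟨i, rfl⟩ := hu
      obtain ⟨j, rfl⟩ := hv
      exact key i j fun h => huv (congrArg x h)
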